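/- Let X₁, ..., X_m be i.i.d. nonnegative integer-valued random variables with tail P(X₁ > x) = L(x) x^{-(τ-2)} for x ≥ 1, where exp(−C(log x)^η) ≤ L(x) ≤ exp(C(log x)^η) for some C > 0, η ∈ (0,1), and τ ∈ (2,3). Let h(m) = exp((2C/(τ-2)^η)(log m)^η). Then P(max_{i≤m} X_i < (m/h(m))^{1/(τ-2)}) ≤ exp(−exp((C/(τ-2)^η)(log m)^η)). -/

import Mathlib

open Real MeasureTheory ProbabilityTheory

theorem stmt_8 {Ω : Type*} [MeasurableSpace Ω] (μ : Measure Ω) [IsProbabilityMeasure μ]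
    (m : ℕ) (hm : 2 ≤ m) (τ η C : ℝ)
    (hτ1 : 2 < τ) (hτ2 : τ < 3) (hη0 : 0 < η) (hη1 : η < 1) (hC : 0 < C)
    (X : Fin m → Ω → ℝ) (hmeas : ∀ i, Measurable (X i))
    (hnonneg : ∀ i ω, 0 ≤ X i ω)
    (hint : ∀ i ω, ∃ k : ℕ, X i ω = k)
    (hindep : iIndepFun X μ)
    (L : ℝ → ℝ)
    (hL : ∀ x : ℝ, 1 ≤ x →
      Real.exp (-C * (Real.log x) ^ η) ≤ L x ∧ L x ≤ Real.exp (C * (Real.log x) ^ η))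
    (htail : ∀ i, ∀ x : ℝ, 1 ≤ x →
      μ {ω | x < X i ω} = ENNReal.ofReal (L x * x ^ (-(τ - 2)))) :
    μ {ω | ∀ i, X i ω <
        ((m : ℝ) / Real.exp ((2 * C / (τ - 2) ^ η) * (Real.log m) ^ η)) ^ (1 / (τ - 2))}
      ≤ ENNReal.ofReal
          (Real.exp (-(Real.exp ((C / (τ - 2) ^ η) * (Real.log m) ^ η)))) := by
  have hτ0 : (0:ℝ) < τ - 2 := by linarith
  have hτne : τ - 2 ≠ 0 := ne_of_gt hτ0
  have hm0 : (0:ℝ) < m := by positivity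
  have hm1 : (1:ℝ) ≤ m := by exact_mod_cast Nat.one_le_of_lt hm
  set t : ℝ := (2 * C / (τ - 2) ^ η) * (Real.log m) ^ η with ht_def
  set b : ℝ := (m : ℝ) / Real.exp t with hb_def
  set y : ℝ := b ^ (1 / (τ - 2)) with hy_def
  have hb0 : 0 < b := by positivity
  have hlogm : 0 ≤ Real.log m := Real.log_nonneg hm1
  have htpow : 0 < (τ - 2) ^ η := Real.rpow_pos_of_pos hτ0 η
  have ht0 : 0 ≤ t := by
    apply mul_nonneg
    · positivity
    · exact Real.rpow_nonneg hlogm η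
  have i0 : Fin m := ⟨0, lt_of_lt_of_le two_pos hm⟩
  by_cases hy1 : y ≤ 1
  · -- In this case μ {X i0 < y} = 0 since L 1 = 1 and hence μ {1 < X i0} = 1
    have hL1 : L 1 = 1 := by
      obtain ⟨h1, h2⟩ := hL 1 le_rfl
      simp only [Real.log_one, Real.zero_rpow (ne_of_gt hη0), mul_zero, neg_zero,
        Real.exp_zero] at h1 h2
      linarith
    have htail1 : μ {ω | (1:ℝ) < X i0 ω} = 1 := by
      rw [htail i0 1 le_rfl, hL1, Real.one_rpow, one_mul, ENNReal.ofReal_one]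
    have hcompl : μ {ω | (1:ℝ) < X i0 ω}ᶜ = 0 := by
      have hms : MeasurableSet {ω | (1:ℝ) < X i0 ω} :=
        measurableSet_lt measurable_const (hmeas i0)
      rw [measure_compl hms (measure_ne_top μ _), htail1, measure_univ, tsub_self]
    have hsub : {ω | ∀ i, X i ω < y} ⊆ {ω | (1:ℝ) < X i0 ω}ᶜ := by
      intro ω hω
      simp only [Set.mem_compl_iff, Set.mem_setOf_eq, not_lt]
      have := hω i0
      linarith
    calc μ {ω | ∀ i, X i ω < y} ≤ μ {ω | (1:ℝ) < X i0 ω}ᶜ := measure_mono hsub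
      _ = 0 := hcompl
      _ ≤ _ := zero_le
  · push_neg at hy1
    set p : ℝ := L y * y ^ (-(τ - 2)) with hp_def
    have hy1' : 1 ≤ y := le_of_lt hy1
    have hy0 : 0 < y := lt_trans one_pos hy1
    -- p is a probability
    have hp_meas : μ {ω | y < X i0 ω} = ENNReal.ofReal p := htail i0 y hy1'
    have hLy_lb : Real.exp (-C * (Real.log y) ^ η) ≤ L y := (hL y hy1').1
    have hLy_pos : 0 < L y := lt_of_lt_of_le (Real.exp_pos _) hLy_lb
    have hp0 : 0 < p := mul_pos hLy_pos (Real.rpow_pos_of_pos hy0 _)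
    have hp1 : p ≤ 1 := by
      have := hp_meas ▸ prob_le_one (μ := μ) (s := {ω | y < X i0 ω})
      rwa [ENNReal.ofReal_le_one] at this
    -- y ^ (-(τ-2)) = exp t / m
    have hyrpow : y ^ (-(τ - 2)) = Real.exp t / m := by
      rw [hy_def, ← Real.rpow_mul (le_of_lt hb0), one_div, inv_mul_eq_div, neg_div,
        div_self hτne, Real.rpow_neg_one, hb_def]
      field_simp
    -- log y ≤ log m / (τ - 2)
    have hlogy : Real.log y ≤ Real.log m / (τ - 2) := by
      rw [hy_def, Real.log_rpow hb0, hb_def, Real.log_div (ne_of_gt hm0)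
        (ne_of_gt (Real.exp_pos t)), Real.log_exp]
      rw [one_div, inv_mul_eq_div, div_le_div_iff₀ hτ0 hτ0]
      nlinarith [mul_le_mul_of_nonneg_right ht0 (le_of_lt hτ0)]
    have hlogy0 : 0 ≤ Real.log y := Real.log_nonneg hy1'
    -- key bound : m * p ≥ q where q = exp ((C/(τ-2)^η) * (log m)^η)
    set q : ℝ := Real.exp ((C / (τ - 2) ^ η) * (Real.log m) ^ η) with hq_def
    have hkey : q ≤ (m : ℝ) * p := by
      have h1 : (Real.log y) ^ η ≤ (Real.log m) ^ η / (τ - 2) ^ η := by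
        rw [← Real.div_rpow hlogm (le_of_lt hτ0)]
        exact Real.rpow_le_rpow hlogy0 hlogy (le_of_lt hη0)
      have h2 : Real.exp (-C * ((Real.log m) ^ η / (τ - 2) ^ η)) ≤ L y := by
        refine le_trans (Real.exp_le_exp.mpr ?_) hLy_lb
        have := mul_le_mul_of_nonneg_left h1 (le_of_lt hC)
        nlinarith
      have h3 : (m : ℝ) * p = L y * Real.exp t := by
        rw [hp_def, hyrpow]; field_simp
      rw [h3]
      calc q = Real.exp (-C * ((Real.log m) ^ η / (τ - 2) ^ η)) * Real.exp t := by
              rw [← Real.exp_add, hq_def, ht_def]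
              congr 1
              field_simp
              ring
        _ ≤ L y * Real.exp t :=
              mul_le_mul_of_nonneg_right h2 (le_of_lt (Real.exp_pos t))
    -- each coordinate measure bound
    have hAi : ∀ i, μ {ω | X i ω < y} ≤ ENNReal.ofReal (1 - p) := by
      intro i
      have hsub : {ω | X i ω < y} ⊆ {ω | y < X i ω}ᶜ := by
        intro ω hω
        simp only [Set.mem_compl_iff, Set.mem_setOf_eq, not_lt]
        exact le_of_lt hω
      have hms : MeasurableSet {ω | y < X i ω} :=
        measurableSet_lt measurable_const (hmeas i)
      calc μ {ω | X i ω < y} ≤ μ {ω | y < X i ω}ᶜ := measure_mono hsub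
        _ = 1 - μ {ω | y < X i ω} := by
            rw [measure_compl hms (measure_ne_top μ _), measure_univ]
        _ = 1 - ENNReal.ofReal p := by rw [htail i y hy1']
        _ = ENNReal.ofReal (1 - p) := by
            rw [← ENNReal.ofReal_one, ← ENNReal.ofReal_sub _ (le_of_lt hp0)]
    -- independence: measure of intersection is product
    have hinter : {ω | ∀ i, X i ω < y} = ⋂ i, {ω | X i ω < y} := by
      ext ω; simp [Set.mem_iInter]
    have hprod : μ {ω | ∀ i, X i ω < y} = ∏ i, μ {ω | X i ω < y} := by
      rw [hinter]
      exact hindep.meas_iInter (fun i => ⟨Set.Iio y, measurableSet_Iio, rfl⟩)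
    rw [hprod]
    calc ∏ i, μ {ω | X i ω < y}
        ≤ ∏ _i : Fin m, ENNReal.ofReal (1 - p) :=
          Finset.prod_le_prod' (fun i _ => hAi i)
      _ = ENNReal.ofReal (1 - p) ^ m := by
          rw [Finset.prod_const, Finset.card_univ, Fintype.card_fin]
      _ = ENNReal.ofReal ((1 - p) ^ m) := (ENNReal.ofReal_pow (show (0:ℝ) ≤ 1 - p by linarith) m).symm
      _ ≤ ENNReal.ofReal (Real.exp (-q)) := by
          apply ENNReal.ofReal_le_ofReal
          calc (1 - p) ^ m ≤ Real.exp (-p) ^ m := by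
                apply pow_le_pow_left₀ (by linarith)
                linarith [Real.add_one_le_exp (-p)]
            _ = Real.exp (-(m * p)) := by
                rw [← Real.exp_nat_mul]; ring_nf
            _ ≤ Real.exp (-q) := Real.exp_le_exp.mpr (by linarith)
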